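/- arXiv:1403.5548 — 4 statements merged into one kernel-verified Lean document; each statement's English description precedes it below -/
import Mathlib

section
/- Let p be a prime with p ≡ 1 (mod 4). Among the elements of multiplicative order 4 modulo p, at most one is a fixed point of the self-power map; i.e., F_4(p) ≤ 1. -/
-- Auxiliary: a fixed point of order 4 is ≡ 1 (mod 4)
lemma fixed_mod_four (p : ℕ) (hp : p.Prime) (a : ℕ) (ha1 : 1 ≤ a)
    (hord : orderOf (a : ZMod p) = 4) (hfix : (a : ZMod p) ^ a = (a : ZMod p)) :
    a % 4 = 1 := by
  haveI : Fact p.Prime := ⟨hp⟩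
  set x : ZMod p := (a : ZMod p) with hx
  have hx0 : x ≠ 0 := by
    intro h
    rw [h, orderOf_eq_zero_iff'.mpr] at hord
    · exact absurd hord (by norm_num)
    · intro n hn hpow
      rw [zero_pow (by omega : n ≠ 0)] at hpow
      exact one_ne_zero hpow.symm
  have hpow : x ^ (a - 1) = 1 := by
    have h1 : x ^ (a - 1) * x = x := by
      have : x ^ ((a - 1) + 1) = x := by rw [Nat.sub_add_cancel ha1]; exact hfix
      rwa [pow_succ] at this
    have := mul_right_cancel₀ hx0 (h1.trans (one_mul x).symm)
    exact this
  have hdvd : 4 ∣ a - 1 := hord ▸ orderOf_dvd_of_pow_eq_one hpow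
  omega

theorem at_most_one_fixed_point_of_order_four (p : ℕ) (hp : p.Prime)
    (h4 : p % 4 = 1) :
    ((Finset.Icc 1 (p - 1)).filter (fun x : ℕ => orderOf (x : ZMod p) = 4 ∧
        (x : ZMod p) ^ x = (x : ZMod p))).card ≤ 1 := by
  haveI : Fact p.Prime := ⟨hp⟩
  rw [Finset.card_le_one]
  intro a ha b hb
  simp only [Finset.mem_filter, Finset.mem_Icc] at ha hb
  obtain ⟨⟨ha1, ha2⟩, horda, hfixa⟩ := ha
  obtain ⟨⟨hb1, hb2⟩, hordb, hfixb⟩ := hb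
  have hp2 : 2 ≤ p := hp.two_le
  have hap : a < p := by omega
  have hbp : b < p := by omega
  -- squares are -1
  have sq_neg_one : ∀ c : ℕ, orderOf (c : ZMod p) = 4 → ((c : ZMod p)) ^ 2 = -1 := by
    intro c hordc
    have h4pow : ((c : ZMod p)) ^ 4 = 1 := hordc ▸ pow_orderOf_eq_one _
    have : ((c : ZMod p) ^ 2) * ((c : ZMod p) ^ 2) = 1 := by
      rw [← pow_add]; exact h4pow
    rcases mul_self_eq_one_iff.mp this with h1 | h1
    · exfalso
      have : orderOf ((c : ZMod p)) ∣ 2 := orderOf_dvd_of_pow_eq_one h1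
      rw [hordc] at this; omega
    · exact h1
  have hsq : ((a : ZMod p)) ^ 2 = ((b : ZMod p)) ^ 2 := by
    rw [sq_neg_one a horda, sq_neg_one b hordb]
  rcases sq_eq_sq_iff_eq_or_eq_neg.mp hsq with heq | hneg
  · -- equal in ZMod p ⇒ equal as naturals
    have : (a : ZMod p).val = (b : ZMod p).val := by rw [heq]
    rwa [ZMod.val_natCast_of_lt hap, ZMod.val_natCast_of_lt hbp] at this
  · -- a = -b mod p : contradiction with residues mod 4
    exfalso
    have hsum : ((a + b : ℕ) : ZMod p) = 0 := by push_cast; rw [hneg]; ring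
    have hdvd : p ∣ a + b := (ZMod.natCast_eq_zero_iff _ _).mp hsum
    have habp : a + b = p := by
      rcases hdvd with ⟨k, hk⟩
      have : k ≤ 1 := by nlinarith
      interval_cases k <;> omega
    have hma := fixed_mod_four p hp a ha1 horda hfixa
    have hmb := fixed_mod_four p hp b hb1 hordb hfixb
    omega
end

section
/- Let p be a prime with p ≡ 1 (mod 6). The number of fixed points of the self-power map of multiplicative order 6 is either 0 or 2; i.e., F_6(p) ∈ {0, 2}. -/
theorem fixed_points_of_order_six_zero_or_two (p : ℕ) (hp : p.Prime)
    (h6 : p % 6 = 1) :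
    ((Finset.Icc 1 (p - 1)).filter (fun x : ℕ => orderOf (x : ZMod p) = 6 ∧
        (x : ZMod p) ^ x = (x : ZMod p))).card = 0 ∨
    ((Finset.Icc 1 (p - 1)).filter (fun x : ℕ => orderOf (x : ZMod p) = 6 ∧
        (x : ZMod p) ^ x = (x : ZMod p))).card = 2 := by
  haveI : Fact p.Prime := ⟨hp⟩
  set S := ((Finset.Icc 1 (p - 1)).filter (fun x : ℕ => orderOf (x : ZMod p) = 6 ∧
        (x : ZMod p) ^ x = (x : ZMod p))) with hSdef
  have hp2 : 2 ≤ p := hp.two_le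
  have hp7 : 7 ≤ p := by omega
  -- injectivity of the cast on Icc 1 (p-1)
  have hcastinj : ∀ a b : ℕ, a ∈ Finset.Icc 1 (p - 1) → b ∈ Finset.Icc 1 (p - 1) →
      (a : ZMod p) = (b : ZMod p) → a = b := by
    intro a b ha hb h
    simp only [Finset.mem_Icc] at ha hb
    have hva := ZMod.val_cast_of_lt (show a < p by omega)
    have hvb := ZMod.val_cast_of_lt (show b < p by omega)
    have : (a : ZMod p).val = (b : ZMod p).val := by rw [h]
    omega
  -- basic facts for members of S
  have main : ∀ x ∈ S, 2 ≤ x ∧ x ≤ p - 1 ∧ orderOf (x : ZMod p) = 6 ∧ x % 6 = 1 ∧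
      (x : ZMod p) ^ 2 = (x : ZMod p) - 1 ∧ (x : ZMod p) ≠ 0 := by
    intro x hx
    rw [hSdef, Finset.mem_filter, Finset.mem_Icc] at hx
    obtain ⟨⟨hx1, hx2⟩, hord, hfix⟩ := hx
    set a : ZMod p := (x : ZMod p) with ha
    have h6pow : a ^ 6 = 1 := by rw [← hord]; exact pow_orderOf_eq_one a
    have ha0 : a ≠ 0 := by
      intro h
      rw [h] at h6pow
      simp at h6pow
    have hx2' : 2 ≤ x := by
      by_contra h
      have hx1e : x = 1 := by omega
      rw [ha, hx1e] at hord
      simp at hord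
    -- a^3 = -1
    have h3 : a ^ 3 = -1 := by
      have hfac : (a ^ 3 - 1) * (a ^ 3 + 1) = 0 := by linear_combination h6pow
      rcases mul_eq_zero.mp hfac with h | h
      · exfalso
        have h31 : a ^ 3 = 1 := by linear_combination h
        have := orderOf_dvd_of_pow_eq_one h31
        rw [hord] at this
        omega
      · linear_combination h
    -- a^2 = a - 1
    have h2 : a ^ 2 = a - 1 := by
      have hfac : (a + 1) * (a ^ 2 - a + 1) = 0 := by linear_combination h3
      rcases mul_eq_zero.mp hfac with h | h
      · exfalso
        have han : a = -1 := by linear_combination h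
        have hsq : a ^ 2 = 1 := by rw [han]; ring
        have := orderOf_dvd_of_pow_eq_one hsq
        rw [hord] at this
        omega
      · linear_combination h
    -- 6 ∣ x - 1
    have hxm : x % 6 = 1 := by
      have hsplit : a ^ (x - 1) * a = a ^ x := by
        rw [← pow_succ]
        congr 1
        omega
      rw [hfix] at hsplit
      have h1a : a ^ (x - 1) * a = 1 * a := by rw [hsplit, one_mul]
      have hpow1 : a ^ (x - 1) = 1 := mul_right_cancel₀ ha0 h1a
      have := orderOf_dvd_of_pow_eq_one hpow1
      rw [hord] at this
      omega
    exact ⟨hx2', hx2, hord, hxm, h2, ha0⟩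
  -- the involution x ↦ p + 1 - x
  have inv : ∀ x ∈ S, (p + 1 - x) ∈ S ∧ (p + 1 - x) ≠ x := by
    intro x hx
    obtain ⟨hx2, hxp, hord, hxm, h2, ha0⟩ := main x hx
    set a : ZMod p := (x : ZMod p) with ha
    have h6pow : a ^ 6 = 1 := by rw [← hord]; exact pow_orderOf_eq_one a
    have h3 : a ^ 3 = -1 := by
      have hfac : (a ^ 3 - 1) * (a ^ 3 + 1) = 0 := by linear_combination h6pow
      rcases mul_eq_zero.mp hfac with h | h
      · exfalso
        have h31 : a ^ 3 = 1 := by linear_combination h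
        have := orderOf_dvd_of_pow_eq_one h31
        rw [hord] at this
        omega
      · linear_combination h
    have hycast : ((p + 1 - x : ℕ) : ZMod p) = 1 - a := by
      have hle : x ≤ p + 1 := by omega
      rw [Nat.cast_sub hle]
      push_cast
      rw [ZMod.natCast_self]
      ring
    have h5 : (1 : ZMod p) - a = a ^ 5 := by linear_combination (-(a^2) : ZMod p) * h3 + h2
    have hordy : orderOf ((p + 1 - x : ℕ) : ZMod p) = 6 := by
      rw [hycast, h5, orderOf_pow' a (by norm_num : (5:ℕ) ≠ 0), hord]
      rfl
    have hymem : p + 1 - x ∈ Finset.Icc 1 (p - 1) := by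
      simp only [Finset.mem_Icc]
      omega
    have hyfix : ((p + 1 - x : ℕ) : ZMod p) ^ (p + 1 - x) = ((p + 1 - x : ℕ) : ZMod p) := by
      set b : ZMod p := ((p + 1 - x : ℕ) : ZMod p) with hb
      have hdvd : (6 : ℕ) ∣ (p + 1 - x - 1) := by omega
      have hpow1 : b ^ (p + 1 - x - 1) = 1 :=
        orderOf_dvd_iff_pow_eq_one.mp (by rw [hordy]; exact hdvd)
      calc b ^ (p + 1 - x) = b ^ (p + 1 - x - 1) * b := by
            rw [← pow_succ]; congr 1; omega
        _ = b := by rw [hpow1, one_mul]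
    have hymemS : (p + 1 - x) ∈ S := by
      rw [hSdef, Finset.mem_filter]
      exact ⟨hymem, hordy, hyfix⟩
    have hne : (p + 1 - x) ≠ x := by
      intro heq
      have hceq : ((p + 1 - x : ℕ) : ZMod p) = a := by rw [heq]
      rw [hycast, h5] at hceq
      have h4 : a ^ 4 * a = 1 * a := by
        rw [one_mul]
        calc a ^ 4 * a = a ^ 5 := by ring
          _ = a := hceq
      have h41 : a ^ 4 = 1 := mul_right_cancel₀ ha0 h4
      have := orderOf_dvd_of_pow_eq_one h41
      rw [hord] at this
      omega
    exact ⟨hymemS, hne⟩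
  -- card ≤ 2
  have hle2 : S.card ≤ 2 := by
    by_contra h
    push_neg at h
    obtain ⟨x, hx, y, hy, z, hz, hxy, hxz, hyz⟩ := Finset.two_lt_card.mp h
    obtain ⟨hx2, hxp, _, _, h2x, _⟩ := main x hx
    obtain ⟨hy2, hyp, _, _, h2y, _⟩ := main y hy
    obtain ⟨hz2, hzp, _, _, h2z, _⟩ := main z hz
    have key : ∀ a b : ZMod p, a ^ 2 = a - 1 → b ^ 2 = b - 1 → a ≠ b → a + b = 1 := by
      intro a b ha hb hab
      have hfac : (a - b) * (a + b - 1) = 0 := by linear_combination ha - hb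
      rcases mul_eq_zero.mp hfac with h | h
      · exact absurd (by linear_combination h) hab
      · linear_combination h
    have hmemx : x ∈ Finset.Icc 1 (p - 1) := Finset.mem_Icc.mpr (by omega)
    have hmemy : y ∈ Finset.Icc 1 (p - 1) := Finset.mem_Icc.mpr (by omega)
    have hmemz : z ∈ Finset.Icc 1 (p - 1) := Finset.mem_Icc.mpr (by omega)
    have hcxy : (x : ZMod p) ≠ (y : ZMod p) := fun h => hxy (hcastinj x y hmemx hmemy h)
    have hcxz : (x : ZMod p) ≠ (z : ZMod p) := fun h => hxz (hcastinj x z hmemx hmemz h)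
    have h1 := key _ _ h2x h2y hcxy
    have h2 := key _ _ h2x h2z hcxz
    have : (y : ZMod p) = (z : ZMod p) := by linear_combination h1 - h2
    exact hyz (hcastinj y z hmemy hmemz this)
  -- card ≠ 1
  have hne1 : S.card ≠ 1 := by
    intro h
    obtain ⟨a, ha⟩ := Finset.card_eq_one.mp h
    have haS : a ∈ S := by rw [ha]; exact Finset.mem_singleton_self a
    obtain ⟨hmem, hne⟩ := inv a haS
    rw [ha, Finset.mem_singleton] at hmem
    exact hne hmem
  omega
end

section
/- Let p be a prime with p ≡ 1 (mod 8). Then at most two of the three candidates (p+3)/4, (p+1)/2, (3p+1)/4 are fixed points of the self-power map of multiplicative order (p-1)/4; i.e., F_{(p-1)/4}(p) ≤ 2. Specifically, (p+1)/2 and (3p+1)/4 cannot both have order (p-1)/4. -/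
theorem fixed_points_order_quarter_mod_eight_one (p : ℕ) (hp : p.Prime)
    (h8 : p % 8 = 1) :
    ((Finset.Icc 1 (p - 1)).filter (fun x : ℕ => orderOf (x : ZMod p) = (p - 1) / 4 ∧
        (x : ZMod p) ^ x = (x : ZMod p))).card ≤ 2 ∧
    ¬ (orderOf ((((p + 1) / 2 : ℕ)) : ZMod p) = (p - 1) / 4 ∧
        orderOf ((((3 * p + 1) / 4 : ℕ)) : ZMod p) = (p - 1) / 4) := by
  haveI : Fact p.Prime := ⟨hp⟩
  have hp2 : 2 ≤ p := hp.two_le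
  have hp9 : 9 ≤ p := by omega
  set d : ℕ := (p - 1) / 4 with hd
  have hd4 : 4 * d = p - 1 := by omega
  have hdeven : 2 ∣ d := by omega
  have hd2 : 2 ≤ d := by omega
  -- casts of the two candidates
  have hpz : ((p : ℕ) : ZMod p) = 0 := ZMod.natCast_self p
  have hc2 : (((p + 1) / 2 : ℕ) : ZMod p) = (2 : ZMod p)⁻¹ := by
    have hdvd : 2 ∣ p + 1 := by omega
    have h1 : ((2 * ((p + 1) / 2) : ℕ) : ZMod p) = 1 := by
      rw [Nat.mul_div_cancel' hdvd]
      push_cast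
      rw [hpz]; ring
    push_cast at h1
    exact eq_inv_of_mul_eq_one_right h1
  have hc4 : (((3 * p + 1) / 4 : ℕ) : ZMod p) = (4 : ZMod p)⁻¹ := by
    have hdvd : 4 ∣ 3 * p + 1 := by omega
    have h1 : ((4 * ((3 * p + 1) / 4) : ℕ) : ZMod p) = 1 := by
      rw [Nat.mul_div_cancel' hdvd]
      push_cast
      rw [hpz]; ring
    push_cast at h1
    exact eq_inv_of_mul_eq_one_right h1
  -- key: not both
  have key : ¬ (orderOf ((((p + 1) / 2 : ℕ)) : ZMod p) = d ∧
      orderOf ((((3 * p + 1) / 4 : ℕ)) : ZMod p) = d) := by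
    rintro ⟨k1, k2⟩
    rw [hc2] at k1
    rw [hc4] at k2
    have h42 : ((4 : ZMod p))⁻¹ = ((2 : ZMod p)⁻¹) ^ 2 := by
      rw [inv_pow]; norm_num
    rw [h42, orderOf_pow' _ (two_ne_zero), k1] at k2
    have : Nat.gcd d 2 = 2 := Nat.gcd_eq_right hdeven
    rw [this] at k2
    omega
  refine ⟨?_, key⟩
  -- identify candidates as naturals
  have e2 : (p + 1) / 2 = 2 * d + 1 := by omega
  have e4 : (3 * p + 1) / 4 = 3 * d + 1 := by omega
  rw [e2, e4] at key
  -- subset of the triple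
  set S := (Finset.Icc 1 (p - 1)).filter (fun x : ℕ => orderOf (x : ZMod p) = d ∧
      (x : ZMod p) ^ x = (x : ZMod p)) with hS
  have hsub : ∀ x ∈ S, x = d + 1 ∨ x = 2 * d + 1 ∨ x = 3 * d + 1 := by
    intro x hx
    rw [hS, Finset.mem_filter, Finset.mem_Icc] at hx
    obtain ⟨⟨hx1, hxp⟩, hord, hfix⟩ := hx
    have hx0 : (x : ZMod p) ≠ 0 := by
      rw [Ne, ZMod.natCast_eq_zero_iff]
      intro hdvd
      have := Nat.le_of_dvd (by omega) hdvd
      omega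
    have hpow : (x : ZMod p) ^ (x - 1) = 1 := by
      have h1 : x - 1 + 1 = x := by omega
      have h2 : (x : ZMod p) ^ (x - 1) * (x : ZMod p) = 1 * (x : ZMod p) := by
        rw [one_mul, ← pow_succ, h1, hfix]
      exact mul_right_cancel₀ hx0 h2
    have hdvd : d ∣ x - 1 := hord ▸ orderOf_dvd_of_pow_eq_one hpow
    obtain ⟨k, hk⟩ := hdvd
    have hk4 : k < 4 := by
      have hlt : d * k < d * 4 := by omega
      exact lt_of_mul_lt_mul_left hlt (Nat.zero_le d)
    interval_cases k
    · -- x = 1, order 1 ≠ d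
      have hx1' : x = 1 := by omega
      rw [hx1'] at hord
      simp at hord
      omega
    · omega
    · omega
    · omega
  -- split on which of the two is excluded
  have hcard : ∀ a b : ℕ, (∀ x ∈ S, x = a ∨ x = b) → S.card ≤ 2 := by
    intro a b h
    have : S ⊆ {a, b} := by
      intro x hx
      simp only [Finset.mem_insert, Finset.mem_singleton]
      exact h x hx
    calc S.card ≤ ({a, b} : Finset ℕ).card := Finset.card_le_card this
      _ ≤ 2 := by
          have := Finset.card_insert_le a ({b} : Finset ℕ)
          simpa using this
  rcases not_and_or.mp key with h | h
  · refine hcard (d + 1) (3 * d + 1) ?_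
    intro x hx
    rcases hsub x hx with h1 | h1 | h1
    · exact Or.inl h1
    · exfalso
      rw [hS, Finset.mem_filter] at hx
      rw [h1] at hx
      exact h hx.2.1
    · exact Or.inr h1
  · refine hcard (d + 1) (2 * d + 1) ?_
    intro x hx
    rcases hsub x hx with h1 | h1 | h1
    · exact Or.inl h1
    · exact Or.inr h1
    · exfalso
      rw [hS, Finset.mem_filter] at hx
      rw [h1] at hx
      exact h hx.2.1
end

section
/- Let p be a prime. The number G(p) of solutions x to x^x ≡ x (mod p) with 1 ≤ x ≤ (p-1)p and p ∤ x equals (p-1) · ∑_{n ∣ p-1} φ(n)/n, where φ is Euler's totient function. -/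
-- counting lemma: number of x in [1, K*N] with x % N = c (c < N) is K
lemma lemA (N K c : ℕ) (hN : 0 < N) (hc : c < N) :
    ((Finset.Icc 1 (K * N)).filter (fun x => x % N = c)).card = K := by
  set t := if c = 0 then N else c with htdef
  have ht1 : 1 ≤ t := by rw [htdef]; split <;> omega
  have htN : t ≤ N := by rw [htdef]; split <;> omega
  have htc : t % N = c := by
    rw [htdef]; split
    · simp [Nat.mod_self]; omega
    · exact Nat.mod_eq_of_lt hc
  have hmain : ((Finset.Icc 1 (K * N)).filter (fun x => x % N = c)).card
      = (Finset.Ico 0 K).card := by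
    apply Finset.card_nbij' (i := fun x => (x - t) / N) (j := fun q => q * N + t)
    · intro x hx
      simp only [Finset.mem_coe, Finset.mem_filter, Finset.mem_Icc] at hx
      simp only [Finset.mem_coe, Finset.mem_Ico]
      refine ⟨Nat.zero_le _, ?_⟩
      rw [Nat.div_lt_iff_lt_mul hN]; omega
    · intro q hq
      simp only [Finset.mem_coe, Finset.mem_Ico] at hq
      simp only [Finset.mem_coe, Finset.mem_filter, Finset.mem_Icc]
      refine ⟨⟨by omega, ?_⟩, ?_⟩
      · have h1 : q + 1 ≤ K := hq.2
        have h2 : (q + 1) * N ≤ K * N := Nat.mul_le_mul_right N h1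
        nlinarith
      · rw [mul_comm, Nat.mul_add_mod]; exact htc
    · intro x hx
      simp only [Finset.mem_coe, Finset.mem_filter, Finset.mem_Icc] at hx
      obtain ⟨⟨hx1, hx2⟩, hxc⟩ := hx
      have htx : t ≤ x := by
        rw [htdef]; split
        · rename_i h0
          subst h0
          exact Nat.le_of_dvd (by omega) (Nat.dvd_of_mod_eq_zero hxc)
        · have := Nat.mod_le x N; omega
      have hdvd : N ∣ x - t := by
        have h : t ≡ x [MOD N] := by unfold Nat.ModEq; omega
        exact (Nat.modEq_iff_dvd' htx).mp h
      show (x - t) / N * N + t = x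
      rw [Nat.div_mul_cancel hdvd]
      omega
    · intro q hq
      show (q * N + t - t) / N = q
      rw [Nat.add_sub_cancel, Nat.mul_div_cancel _ hN]
  rw [hmain]; simp

lemma fiber_card (p : ℕ) (hp : p.Prime) (y : ZMod p) (hy : y ≠ 0) :
    ((Finset.Icc 1 ((p - 1) * p)).filter
      (fun x : ℕ => (¬ p ∣ x ∧ (x : ZMod p) ^ x = (x : ZMod p)) ∧ (x : ZMod p) = y)).card
      = (p - 1) / orderOf y := by
  haveI : Fact p.Prime := ⟨hp⟩
  have hp2 : 2 ≤ p := hp.two_le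
  set u : (ZMod p)ˣ := Units.mk0 y hy with hu
  have huy : (u : ZMod p) = y := rfl
  have hord : orderOf y = orderOf u := by rw [← huy, orderOf_units]
  have hdvd : orderOf y ∣ p - 1 := by
    rw [hord]
    have h := orderOf_dvd_card (G := (ZMod p)ˣ) (x := u)
    rwa [ZMod.card_units_eq_totient, Nat.totient_prime hp] at h
  have hd0 : 0 < orderOf y := by rw [hord]; exact orderOf_pos u
  have hcop : Nat.Coprime p (orderOf y) := by
    have h1 : Nat.Coprime p (p - 1) :=
      (Nat.coprime_self_sub_right (by omega)).mpr (Nat.coprime_one_right p)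
    exact Nat.Coprime.coprime_dvd_right hdvd h1
  obtain ⟨c, hc1, hc2⟩ := Nat.chineseRemainder hcop y.val 1
  have e0 : ((y.val : ℕ) : ZMod p) = y := by rw [ZMod.natCast_val, ZMod.cast_id]
  have key : ∀ x : ℕ, ((¬ p ∣ x ∧ (x : ZMod p) ^ x = (x : ZMod p)) ∧ (x : ZMod p) = y)
      ↔ x % (p * orderOf y) = c % (p * orderOf y) := by
    intro x
    have hcrt : (x ≡ c [MOD p] ∧ x ≡ c [MOD orderOf y]) ↔ x ≡ c [MOD p * orderOf y] :=
      Nat.modEq_and_modEq_iff_modEq_mul hcop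
    have e1 : ((x : ZMod p) = y) ↔ x ≡ y.val [MOD p] := by
      conv_lhs => rw [← e0]
      exact ZMod.natCast_eq_natCast_iff x y.val p
    constructor
    · rintro ⟨⟨hnd, hpow⟩, hxy⟩
      rw [hxy] at hpow
      have hux : u ^ x = u ^ 1 := by
        ext
        push_cast
        rw [huy, pow_one, hpow]
      have hmod : x ≡ 1 [MOD orderOf u] := pow_eq_pow_iff_modEq.mp hux
      rw [← hord] at hmod
      exact hcrt.mp ⟨(e1.mp hxy).trans hc1.symm, hmod.trans hc2.symm⟩
    · intro h
      obtain ⟨hxp, hxd⟩ := hcrt.mpr h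
      have hxy : (x : ZMod p) = y := e1.mpr (hxp.trans hc1)
      have hnd : ¬ p ∣ x := by
        intro hdvdx
        apply hy
        rw [← hxy, ZMod.natCast_eq_zero_iff]
        exact hdvdx
      have hmod : x ≡ 1 [MOD orderOf u] := by
        rw [← hord]
        exact hxd.trans hc2
      have hux : u ^ x = u ^ 1 := pow_eq_pow_iff_modEq.mpr hmod
      have hpow : (x : ZMod p) ^ x = (x : ZMod p) := by
        rw [hxy]
        have h2 := congrArg (Units.val) hux
        push_cast at h2
        rw [huy] at h2
        simpa using h2
      exact ⟨⟨hnd, hpow⟩, hxy⟩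
  have hrw : ((Finset.Icc 1 ((p - 1) * p)).filter
      (fun x : ℕ => (¬ p ∣ x ∧ (x : ZMod p) ^ x = (x : ZMod p)) ∧ (x : ZMod p) = y))
      = ((Finset.Icc 1 ((p - 1) * p)).filter (fun x => x % (p * orderOf y) = c % (p * orderOf y))) := by
    apply Finset.filter_congr
    intro x _
    simp only [key]
  rw [hrw]
  have hKN : (p - 1) * p = ((p - 1) / orderOf y) * (p * orderOf y) := by
    obtain ⟨k, hk⟩ := hdvd
    rw [hk, Nat.mul_div_cancel_left k hd0]
    ring
  rw [hKN]
  exact lemA (p * orderOf y) ((p - 1) / orderOf y) (c % (p * orderOf y)) (by positivity)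
    (Nat.mod_lt _ (by positivity))

theorem count_fixed_points_extended_range (p : ℕ) (hp : p.Prime) :
    ((Finset.Icc 1 ((p - 1) * p)).filter (fun x : ℕ => ¬ p ∣ x ∧
        (x : ZMod p) ^ x = (x : ZMod p))).card =
      ∑ n ∈ (p - 1).divisors, ((p - 1) / n) * n.totient := by
  haveI : Fact p.Prime := ⟨hp⟩
  have hp2 : 2 ≤ p := hp.two_le
  have hcard : Fintype.card (ZMod p)ˣ = p - 1 := by
    rw [ZMod.card_units_eq_totient, Nat.totient_prime hp]
  rw [Finset.card_eq_sum_card_fiberwise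
    (f := fun x : ℕ => (x : ZMod p)) (t := Finset.univ) (fun x _ => Finset.mem_univ _)]
  simp_rw [Finset.filter_filter]
  have hfib : ∀ y : ZMod p,
      ((Finset.Icc 1 ((p - 1) * p)).filter
        (fun x : ℕ => (¬ p ∣ x ∧ (x : ZMod p) ^ x = (x : ZMod p)) ∧ (x : ZMod p) = y)).card
      = if y = 0 then 0 else (p - 1) / orderOf y := by
    intro y
    by_cases hy : y = 0
    · subst hy
      rw [if_pos rfl, Finset.card_eq_zero, Finset.filter_eq_empty_iff]
      rintro x _ ⟨⟨hnd, _⟩, hx0⟩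
      exact hnd ((ZMod.natCast_eq_zero_iff x p).mp hx0)
    · rw [if_neg hy]
      exact fiber_card p hp y hy
  simp_rw [hfib]
  -- transfer the sum to units
  have step1 : (∑ y : ZMod p, if y = 0 then 0 else (p - 1) / orderOf y)
      = ∑ u : (ZMod p)ˣ, (p - 1) / orderOf u := by
    have h1 : ∀ y : ZMod p, (if y = 0 then 0 else (p - 1) / orderOf y)
        = if y ≠ 0 then (p - 1) / orderOf y else 0 := by
      intro y; by_cases hy : y = 0 <;> simp [hy]
    simp_rw [h1, ← Finset.sum_filter]
    symm
    refine Finset.sum_bij' (i := fun (u : (ZMod p)ˣ) (_ : u ∈ Finset.univ) => (u : ZMod p))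
      (j := fun y hy => Units.mk0 y (by simpa using (Finset.mem_filter.mp hy).2))
      ?_ ?_ ?_ ?_ ?_
    · intro u _
      simp [Units.ne_zero]
    · intro y hy
      exact Finset.mem_univ _
    · intro u _
      exact Units.ext rfl
    · intro y hy
      rfl
    · intro u _
      rw [orderOf_units]
  rw [step1]
  -- fiberwise over orderOf
  have hmaps : ∀ u : (ZMod p)ˣ, u ∈ Finset.univ → orderOf u ∈ (p - 1).divisors := by
    intro u _
    rw [Nat.mem_divisors]
    exact ⟨hcard ▸ orderOf_dvd_card, by omega⟩
  rw [← Finset.sum_fiberwise_of_maps_to hmaps (fun u => (p - 1) / orderOf u)]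
  apply Finset.sum_congr rfl
  intro n hn
  have hn' : n ∣ p - 1 := (Nat.mem_divisors.mp hn).1
  rw [Finset.sum_congr rfl (fun u hu => by rw [(Finset.mem_filter.mp hu).2])]
  rw [Finset.sum_const, IsCyclic.card_orderOf_eq_totient (by rw [hcard]; exact hn'),
    smul_eq_mul, mul_comm]
end
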